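/- Let (M,F) be a Finsler submanifold of (M̃,F̃) with ambient Finsler–Ehresmann connection HTM̃₀ and normal pulled-back bundle π*TM^⊥. Then the induced Finsler–Ehresmann connection HTM₀ is a vector subbundle of HTM̃₀|_{TM₀} ⊕ θ̃⁻¹(π*TM^⊥). -/

import Mathlib

open scoped RealInnerProductSpace

/-- Pointwise (fiberwise) formulation: `T` is the fiber of `TTM̃₀` over a point of `TM₀`,
equipped with the Sasaki-type inner product; `θ̃ : T → W` is the ambient Finsler–Ehresmann
form with values in the fiber `W` of `π*TM̃`, whose kernel is the ambient horizontal bundle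
`HTM̃₀`; `Vt` is the vertical subbundle `VTM̃₀`, complementary to the kernel and with the
horizontal space its Sasaki-orthogonal complement; `W = WT ⊕ Wperp` is the g̃-orthogonal
decomposition `π*TM̃|_{TM₀} = π*TM ⊕ π*TM^⊥`.  The induced vertical bundle is
`VTM₀ = Vt ⊓ θ̃⁻¹(π*TM)` and the induced horizontal bundle `HTM₀` is orthogonal to it.
Then `HTM₀` is contained in (is a subbundle of) `HTM̃₀|_{TM₀} ⊕ θ̃⁻¹(π*TM^⊥)`. -/
theorem stmt10 {T W : Type*} [NormedAddCommGroup T] [InnerProductSpace ℝ T]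
    [FiniteDimensional ℝ T] [AddCommGroup W] [Module ℝ W]
    (θt : T →ₗ[ℝ] W)                                  -- the Finsler–Ehresmann form θ̃
    (Vt : Submodule ℝ T)                              -- the vertical subbundle VTM̃₀
    (hcompl : IsCompl (LinearMap.ker θt) Vt)          -- TTM̃₀ = HTM̃₀ ⊕ VTM̃₀, HTM̃₀ = ker θ̃
    (hH : LinearMap.ker θt = Vtᗮ)                     -- HTM̃₀ is Sasaki-orthogonal to VTM̃₀
    (hsurj : ∀ w : W, ∃ x ∈ Vt, θt x = w)             -- θ̃ : VTM̃₀ ≅ π*TM̃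
    (WT Wperp : Submodule ℝ W)                        -- π*TM and π*TM^⊥
    (hW : IsCompl WT Wperp)                           -- π*TM̃|_{TM₀} = π*TM ⊕ π*TM^⊥
    (horth : ∀ x ∈ Vt ⊓ Submodule.comap θt WT,
      ∀ z ∈ Vt ⊓ Submodule.comap θt Wperp, ⟪x, z⟫ = 0) -- Sasaki transfers g̃-orthogonality
    (HTM0 : Submodule ℝ T)                            -- the induced Ehresmann connection HTM₀
    (hHTM0 : HTM0 ≤ (Vt ⊓ Submodule.comap θt WT)ᗮ) :  -- HTM₀ is orthogonal to VTM₀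
    HTM0 ≤ (LinearMap.ker θt) ⊔ (Vt ⊓ Submodule.comap θt Wperp) := by

  set A := Vt ⊓ Submodule.comap θt WT with hA
  set B := (LinearMap.ker θt) ⊔ (Vt ⊓ Submodule.comap θt Wperp) with hB
  -- B is orthogonal to A
  have hBle : B ≤ Aᗮ := by
    apply sup_le
    · rw [hH]
      exact Submodule.orthogonal_le inf_le_left
    · intro z hz
      rw [Submodule.mem_orthogonal]
      intro x hx
      exact horth x hx z hz
  -- A ⊔ B = ⊤
  have hsup : A ⊔ B = ⊤ := by
    rw [eq_top_iff]
    intro t _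
    obtain ⟨h, v, hh, hv, rfl⟩ := Submodule.codisjoint_iff_exists_add_eq.mp hcompl.codisjoint t
    have hw := hW.codisjoint
    obtain ⟨wT, wp, hwT, hwp, hwsum⟩ := Submodule.codisjoint_iff_exists_add_eq.mp hw (θt v)
    obtain ⟨v1, hv1, hθv1⟩ := hsurj wT
    have hv1A : v1 ∈ A := ⟨hv1, show θt v1 ∈ WT by rw [hθv1]; exact hwT⟩
    have hv2 : v - v1 ∈ Vt ⊓ Submodule.comap θt Wperp := by
      refine ⟨Vt.sub_mem hv hv1, ?_⟩
      show θt (v - v1) ∈ Wperp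
      have : θt (v - v1) = wp := by rw [map_sub, hθv1, ← hwsum]; abel
      rw [this]; exact hwp
    have : h + v = v1 + (h + (v - v1)) := by abel
    rw [this]
    exact Submodule.add_mem _ (Submodule.mem_sup_left hv1A)
      (Submodule.mem_sup_right (Submodule.add_mem _ (Submodule.mem_sup_left hh)
        (Submodule.mem_sup_right hv2)))
  -- finrank comparison: finrank Aᗮ ≤ finrank B
  have hfin : Module.finrank ℝ Aᗮ ≤ Module.finrank ℝ B := by
    have h1 := Submodule.finrank_add_finrank_orthogonal (K := A)
    have h2 := Submodule.finrank_sup_add_finrank_inf_eq A B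
    rw [hsup] at h2
    rw [finrank_top ℝ T] at h2
    omega
  have : Aᗮ = B := (Submodule.eq_of_le_of_finrank_le hBle hfin).symm
  exact le_trans hHTM0 this.le
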